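/- arXiv:1508.04266 — 5 statements merged into one kernel-verified Lean document; each statement's English description precedes it below -/
import Mathlib

section
/- Let X be a random vector in ℝ^d whose cumulant generating function φ(t) = log E[exp⟨X,t⟩] is finite for every t ∈ ℝ^d. Suppose that for every n ∈ ℕ, all t₁,…,tₙ ∈ ℝ^d, every h ∈ ℝ^d, and all u₁,…,uₙ ∈ [0,1] with u₁+⋯+uₙ = 1, one has φ(∑ᵢ uᵢtᵢ) − ∑ᵢ uᵢφ(tᵢ) = φ(h + ∑ᵢ uᵢtᵢ) − ∑ᵢ uᵢφ(tᵢ + h). Then there exist a vector μ ∈ ℝ^d and a symmetric positive semidefinite d×d real matrix Σ such that φ(t) = ⟨μ,t⟩ + ½⟨t, Σt⟩ for all t ∈ ℝ^d. -/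
open MeasureTheory Matrix Real

/-- If the everywhere-finite cumulant generating function
`φ(t) = log E[exp⟨X,t⟩]` of a random vector `X` in `ℝ^d` satisfies the shift-invariance
identity for all convex combinations, then `φ` is a quadratic polynomial
`φ(t) = ⟨μ,t⟩ + ½⟨t, Σt⟩` with `Σ` symmetric positive semidefinite. -/
theorem stmt_0 {Ω : Type*} [MeasurableSpace Ω] (P : Measure Ω) [IsProbabilityMeasure P]
    {d : ℕ} (X : Ω → (Fin d → ℝ)) (hX : Measurable X)
    (hint : ∀ t : Fin d → ℝ, Integrable (fun ω => Real.exp (X ω ⬝ᵥ t)) P)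
    (φ : (Fin d → ℝ) → ℝ)
    (hφ : ∀ t, φ t = Real.log (∫ ω, Real.exp (X ω ⬝ᵥ t) ∂P))
    (hstat : ∀ (n : ℕ) (t : Fin n → (Fin d → ℝ)) (h : Fin d → ℝ) (u : Fin n → ℝ),
      (∀ i, u i ∈ Set.Icc (0 : ℝ) 1) → (∑ i, u i) = 1 →
      φ (∑ i, u i • t i) - ∑ i, u i * φ (t i)
        = φ (h + ∑ i, u i • t i) - ∑ i, u i * φ (t i + h)) :
    ∃ (μ : Fin d → ℝ) (S : Matrix (Fin d) (Fin d) ℝ), S.IsSymm ∧ S.PosSemidef ∧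
      ∀ t : Fin d → ℝ, φ t = μ ⬝ᵥ t + (1 / 2) * (t ⬝ᵥ S.mulVec t) := by
  classical
  -- positivity of the integrals
  have hpos : ∀ a : Fin d → ℝ, 0 < ∫ ω, Real.exp (X ω ⬝ᵥ a) ∂P := by
    intro a
    rw [integral_pos_iff_support_of_nonneg (fun ω => (Real.exp_pos _).le) (hint a)]
    have : Function.support (fun ω => Real.exp (X ω ⬝ᵥ a)) = Set.univ := by
      ext ω; simp [Function.mem_support, Real.exp_ne_zero]
    simp [this]
  have hφ0 : φ 0 = 0 := by
    rw [hφ]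
    simp
  -- convexity of φ
  have hconv : ConvexOn ℝ Set.univ φ := by
    refine ⟨convex_univ, ?_⟩
    intro a _ b _ la lb hla hlb hlab
    rcases hla.eq_or_lt with h0 | hla'
    · have hb1 : lb = 1 := by linarith
      simp [← h0, hb1]
    rcases hlb.eq_or_lt with h0 | hlb'
    · have ha1 : la = 1 := by linarith
      simp [← h0, ha1]
    have hla1 : la < 1 := by linarith
    have hlb1 : lb < 1 := by linarith
    have hpq : Real.HolderConjugate (1/la) (1/lb) := by
      constructor
      · rw [one_div, inv_inv, one_div, inv_inv, inv_one]; exact hlab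
      · exact one_div_pos.mpr hla'
      · exact one_div_pos.mpr hlb'
    have mema : ∀ (c : Fin d → ℝ) (l : ℝ), 0 < l →
        MemLp (fun ω => Real.exp (X ω ⬝ᵥ c) ^ l) (ENNReal.ofReal (1/l)) P := by
      intro c l hl
      have h1 : MemLp (fun ω => Real.exp (X ω ⬝ᵥ c)) 1 P :=
        (memLp_one_iff_integrable).mpr (hint c)
      have h2 := (memLp_norm_rpow_iff (q := ENNReal.ofReal l) (p := 1)
        h1.aestronglyMeasurable (by simp [hl.not_ge]) (by simp)).mpr h1
      simp only [ENNReal.toReal_ofReal hl.le, Real.norm_eq_abs,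
        abs_of_pos (Real.exp_pos _)] at h2
      rwa [one_div, ← ENNReal.ofReal_inv_of_pos hl, ← one_div] at h2
    have key := integral_mul_le_Lp_mul_Lq_of_nonneg (μ := P) hpq
      (Filter.Eventually.of_forall fun ω => Real.rpow_nonneg (Real.exp_pos _).le _)
      (Filter.Eventually.of_forall fun ω => Real.rpow_nonneg (Real.exp_pos _).le _)
      (mema a la hla') (mema b lb hlb')
    have e1 : ∀ ω, Real.exp (X ω ⬝ᵥ a) ^ la * Real.exp (X ω ⬝ᵥ b) ^ lb
        = Real.exp (X ω ⬝ᵥ (la • a + lb • b)) := by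
      intro ω
      rw [Real.rpow_def_of_pos (Real.exp_pos _), Real.rpow_def_of_pos (Real.exp_pos _),
        Real.log_exp, Real.log_exp, ← Real.exp_add]
      congr 1
      simp only [dotProduct_add, dotProduct_smul, smul_eq_mul]
      ring
    have e2 : ∀ (c : Fin d → ℝ) (l : ℝ) (hl : 0 < l) (ω : Ω),
        (Real.exp (X ω ⬝ᵥ c) ^ l) ^ (1 / l) = Real.exp (X ω ⬝ᵥ c) := by
      intro c l hl ω
      rw [← Real.rpow_mul (Real.exp_pos _).le, mul_one_div_cancel hl.ne', Real.rpow_one]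
    simp only [e1, e2 a la hla', e2 b lb hlb', one_div_one_div] at key
    rw [smul_eq_mul, smul_eq_mul, hφ, hφ, hφ]
    calc Real.log (∫ ω, Real.exp (X ω ⬝ᵥ (la • a + lb • b)) ∂P)
        ≤ Real.log ((∫ ω, Real.exp (X ω ⬝ᵥ a) ∂P) ^ la * (∫ ω, Real.exp (X ω ⬝ᵥ b) ∂P) ^ lb) :=
          Real.log_le_log (hpos _) key
      _ = la * Real.log (∫ ω, Real.exp (X ω ⬝ᵥ a) ∂P)
            + lb * Real.log (∫ ω, Real.exp (X ω ⬝ᵥ b) ∂P) := by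
          rw [Real.log_mul (Real.rpow_pos_of_pos (hpos a) _).ne'
            (Real.rpow_pos_of_pos (hpos b) _).ne',
            Real.log_rpow (hpos a), Real.log_rpow (hpos b)]
  -- continuity of φ
  have hcont : Continuous φ := hconv.locallyLipschitz.continuous
  -- the second-difference function
  set g : (Fin d → ℝ) → (Fin d → ℝ) → ℝ := fun h x => φ (x + h) - φ x - φ h with hgdef
  have comb : ∀ (h a b : Fin d → ℝ) (l : ℝ), 0 ≤ l → l ≤ 1 →
      g h (l • a + (1 - l) • b) = l * g h a + (1 - l) * g h b := by
    intro h a b l hl0 hl1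
    have H := hstat 2 ![a, b] h ![l, 1 - l]
      (by intro i; fin_cases i <;> constructor <;> simp <;> linarith)
      (by simp [Fin.sum_univ_two])
    rw [Fin.sum_univ_two, Fin.sum_univ_two, Fin.sum_univ_two] at H
    simp only [Matrix.cons_val_zero, Matrix.cons_val_one, Matrix.head_cons] at H
    rw [add_comm h (l • a + (1 - l) • b)] at H
    simp only [hgdef]
    linear_combination -H
  have g0 : ∀ h, g h 0 = 0 := by
    intro h; simp only [hgdef]; simp [hφ0]
  have ghalf : ∀ h x, g h ((1/2 : ℝ) • x) = (1/2) * g h x := by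
    intro h x
    have := comb h x 0 (1/2) (by norm_num) (by norm_num)
    simpa [g0 h] using this
  have gadd : ∀ h x y, g h (x + y) = g h x + g h y := by
    intro h x y
    have h1 := comb h x y (1/2) (by norm_num) (by norm_num)
    have h2 : (1/2 : ℝ) • x + (1 - 1/2 : ℝ) • y = (1/2 : ℝ) • (x + y) := by
      rw [smul_add]; norm_num
    rw [h2, ghalf h (x + y)] at h1
    norm_num at h1
    linear_combination 2 * h1
  have gsymm : ∀ h x, g h x = g x h := by
    intro h x; simp only [hgdef]; rw [add_comm]; ring
  have gcont : ∀ h, Continuous (g h) := by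
    intro h
    simp only [hgdef]
    exact ((hcont.comp (continuous_id.add continuous_const)).sub hcont).sub continuous_const
  -- ℝ-linear maps from additivity + continuity
  have gLin : ∀ h, ∃ L : (Fin d → ℝ) →L[ℝ] ℝ, ∀ x, L x = g h x := by
    intro h
    exact ⟨(AddMonoidHom.mk' (g h) (gadd h)).toRealLinearMap (gcont h), fun x => rfl⟩
  have gsmul : ∀ h (c : ℝ) x, g h (c • x) = c * g h x := by
    intro h c x
    obtain ⟨L, hL⟩ := gLin h
    rw [← hL, ← hL, L.map_smul, smul_eq_mul]
  have gsum : ∀ h (f : Fin d → (Fin d → ℝ)), g h (∑ i, f i) = ∑ i, g h (f i) := by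
    intro h f
    obtain ⟨L, hL⟩ := gLin h
    rw [← hL, map_sum]
    simp [hL]
  -- the linear part q
  set q : (Fin d → ℝ) → ℝ := fun t => 2 * φ t - φ (t + t) / 2 with hqdef
  have hq_eq : ∀ t, q t = φ t - g t t / 2 := by
    intro t; simp only [hqdef, hgdef]; ring
  have qadd : ∀ x y, q (x + y) = q x + q y := by
    intro x y
    have e1 : φ (x + y) = φ x + φ y + g y x := by simp only [hgdef]; ring
    have e2 : g (x + y) (x + y) = g x x + 2 * g y x + g y y := by
      rw [gsymm (x + y) (x + y), gadd (x + y) x y, gsymm (x+y) x, gsymm (x+y) y,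
        gadd x x y, gadd y x y, gsymm x y]
      ring
    rw [hq_eq, hq_eq, hq_eq, e1, e2]
    ring
  have qcont : Continuous q := by
    simp only [hqdef]
    exact (continuous_const.mul hcont).sub
      ((hcont.comp (continuous_id.add continuous_id)).div_const 2)
  have qLin : ∃ L : (Fin d → ℝ) →L[ℝ] ℝ, ∀ x, L x = q x :=
    ⟨(AddMonoidHom.mk' q qadd).toRealLinearMap qcont, fun x => rfl⟩
  obtain ⟨Q, hQ⟩ := qLin
  -- the canonical basis
  set e : Fin d → (Fin d → ℝ) := fun i => fun j => if i = j then 1 else 0 with hedef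
  have hrep : ∀ t : Fin d → ℝ, t = ∑ i, t i • e i := fun t => pi_eq_sum_univ t
  -- nonnegativity of g t t
  have gnn : ∀ t, 0 ≤ g t t := by
    intro t
    have := hconv.2 (Set.mem_univ (t + t)) (Set.mem_univ (0 : Fin d → ℝ))
      (by norm_num : (0:ℝ) ≤ 1/2) (by norm_num : (0:ℝ) ≤ 1/2) (by norm_num)
    have ht : (1/2 : ℝ) • (t + t) + (1/2 : ℝ) • (0 : Fin d → ℝ) = t := by
      rw [smul_zero, add_zero, smul_add]
      ext j; simp; ring
    rw [ht, hφ0, smul_eq_mul, smul_eq_mul] at this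
    simp only [hgdef]
    nlinarith [this]
  have hgx : ∀ h x : Fin d → ℝ, g h x = ∑ j, x j * g h (e j) := by
    intro h x
    conv_lhs => rw [hrep x]
    rw [gsum]
    exact Finset.sum_congr rfl fun j _ => gsmul h (x j) (e j)
  have hMt : ∀ x : Fin d → ℝ, x ⬝ᵥ (Matrix.of fun i j => g (e i) (e j)) *ᵥ x = g x x := by
    intro x
    rw [hgx x x]
    simp only [dotProduct, Matrix.mulVec, dotProduct, Matrix.of_apply]
    refine Finset.sum_congr rfl fun i _ => ?_
    have hgi : g x (e i) = ∑ j, x j * g (e j) (e i) := by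
      rw [gsymm x (e i), hgx (e i) x]
      exact Finset.sum_congr rfl fun j _ => by rw [gsymm (e i) (e j)]
    rw [hgi, Finset.mul_sum, Finset.mul_sum]
    refine Finset.sum_congr rfl fun j _ => ?_
    rw [gsymm (e j) (e i)]
    ring
  refine ⟨fun i => q (e i), Matrix.of (fun i j => g (e i) (e j)), ?_, posSemidef_iff_dotProduct_mulVec.mpr ⟨?_, ?_⟩, ?_⟩
  · show (Matrix.of (fun i j => g (e i) (e j)))ᵀ = _
    ext i j
    simp only [Matrix.transpose_apply, Matrix.of_apply]
    exact gsymm (e j) (e i)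
  · show (Matrix.of (fun i j => g (e i) (e j)))ᴴ = _
    ext i j
    simp only [Matrix.conjTranspose_apply, Matrix.of_apply, star_trivial]
    exact gsymm (e j) (e i)
  · intro x
    have hsx : star x = x := by funext j; simp
    rw [hsx, hMt x]
    exact gnn x
  · intro t
    have hqt : q t = ∑ i, t i * q (e i) := by
      conv_lhs => rw [hrep t]
      rw [← hQ, map_sum]
      refine Finset.sum_congr rfl fun i _ => ?_
      rw [Q.map_smul, smul_eq_mul, hQ]
    have hphi : φ t = q t + g t t / 2 := by rw [hq_eq]; ring
    rw [hphi, hqt, ← hMt t]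
    have hdp : (fun i => q (e i)) ⬝ᵥ t = ∑ i, t i * q (e i) := by
      simp only [dotProduct]
      exact Finset.sum_congr rfl fun i _ => mul_comm _ _
    rw [hdp]
    ring
end

section
/- Let X be a random vector in ℝ^d whose cumulant generating function φ(t) = log E[exp⟨X,t⟩] is finite for every t ∈ ℝ^d. Suppose that for all t₁, t₂, h ∈ ℝ^d and all δ ∈ [0,1], one has φ((1−δ)t₁ + δt₂) − (1−δ)φ(t₁) − δφ(t₂) = φ((1−δ)t₁ + δt₂ + h) − (1−δ)φ(t₁ + h) − δφ(t₂ + h). Then there exist a vector μ ∈ ℝ^d and a symmetric positive semidefinite d×d real matrix Σ such that φ(t) = ⟨μ,t⟩ + ½⟨t, Σt⟩ for all t ∈ ℝ^d. -/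
open MeasureTheory Matrix Real

private lemma cauchy_linear (g : ℝ → ℝ) (hadd : ∀ a b, g (a + b) = g a + g b)
    (C : ℝ) (hC : ∀ r ∈ Set.Icc (0:ℝ) 1, g r ≤ C) (r : ℝ) : g r = r * g 1 := by
  have hadd' : ∀ a b : ℝ, (g (a + b) - (a + b) * g 1) = (g a - a * g 1) + (g b - b * g 1) := by
    intro a b; rw [hadd a b]; ring
  set H : ℝ →+ ℝ := AddMonoidHom.mk' (fun x => g x - x * g 1) hadd' with hH
  have hHx : ∀ x : ℝ, H x = g x - x * g 1 := fun x => rfl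
  have hq : ∀ q : ℚ, H (q : ℝ) = 0 := by
    intro q
    have h2 := map_ratCast_smul H ℝ ℝ q (1:ℝ)
    have h1 : H (1:ℝ) = 0 := by rw [hHx]; ring
    simpa [h1] using h2
  have hCb : ∀ x ∈ Set.Icc (0:ℝ) 1, H x ≤ C + |g 1| := by
    intro x hx
    have e1 : 0 ≤ x * (g 1 + |g 1|) := mul_nonneg hx.1 (by linarith [neg_abs_le (g 1)])
    have e2 : 0 ≤ (1 - x) * |g 1| := mul_nonneg (by linarith [hx.2]) (abs_nonneg _)
    rw [hHx]
    nlinarith [hC x hx]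
  have key : ∀ x : ℝ, 0 < H x → False := by
    intro x hx
    obtain ⟨n, hn⟩ := exists_nat_gt ((C + |g 1|) / H x)
    have hn' : (C + |g 1|) < n * H x := by rwa [div_lt_iff₀ hx] at hn
    obtain ⟨q, hq1, hq2⟩ := exists_rat_btwn (show (n:ℝ) * x - 1 < n * x by linarith)
    have hy1 : ((n:ℝ) * x - q) ∈ Set.Icc (0:ℝ) 1 := ⟨by linarith, by linarith⟩
    have hHnx : H ((n:ℝ) * x) = (n:ℝ) * H x := by
      have h3 := map_nsmul H n x
      simpa [nsmul_eq_mul] using h3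
    have hHy : H ((n:ℝ) * x - q) = (n:ℝ) * H x := by
      rw [map_sub H, hHnx, hq q, sub_zero]
    linarith [hCb _ hy1]
  have hzero : ∀ x : ℝ, H x = 0 := by
    intro x
    rcases lt_trichotomy (H x) 0 with hlt | he | hgt
    · exact absurd (key (-x) (by rw [map_neg]; linarith)) (not_false)
    · exact he
    · exact (key x hgt).elim
  have h4 := hzero r
  rw [hHx] at h4
  linarith

/-- The two-point (`n = 2`) shift-invariance identity for the everywhere-finite
cumulant generating function `φ(t) = log E[exp⟨X,t⟩]` already forces
`φ(t) = ⟨μ,t⟩ + ½⟨t, Σt⟩` with `Σ` symmetric positive semidefinite. -/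
theorem stmt_1 {Ω : Type*} [MeasurableSpace Ω] (P : Measure Ω) [IsProbabilityMeasure P]
    {d : ℕ} (X : Ω → (Fin d → ℝ)) (hX : Measurable X)
    (hint : ∀ t : Fin d → ℝ, Integrable (fun ω => Real.exp (X ω ⬝ᵥ t)) P)
    (φ : (Fin d → ℝ) → ℝ)
    (hφ : ∀ t, φ t = Real.log (∫ ω, Real.exp (X ω ⬝ᵥ t) ∂P))
    (hstat : ∀ (t₁ t₂ h : Fin d → ℝ) (δ : ℝ), δ ∈ Set.Icc (0 : ℝ) 1 →
      φ ((1 - δ) • t₁ + δ • t₂) - (1 - δ) * φ t₁ - δ * φ t₂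
        = φ ((1 - δ) • t₁ + δ • t₂ + h) - (1 - δ) * φ (t₁ + h) - δ * φ (t₂ + h)) :
    ∃ (μ : Fin d → ℝ) (S : Matrix (Fin d) (Fin d) ℝ), S.IsSymm ∧ S.PosSemidef ∧
      ∀ t : Fin d → ℝ, φ t = μ ⬝ᵥ t + (1 / 2) * (t ⬝ᵥ S.mulVec t) := by
  classical
  -- positivity of the normalizing integral
  have hP : ∀ t : Fin d → ℝ, 0 < ∫ ω, Real.exp (X ω ⬝ᵥ t) ∂P := by
    intro t
    have h := ProbabilityTheory.mgf_pos (μ := P) (X := fun ω => X ω ⬝ᵥ t) (t := 1)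
      (by simpa [one_mul] using hint t)
    simpa [ProbabilityTheory.mgf, one_mul] using h
  have hφ0 : φ 0 = 0 := by
    rw [hφ 0]
    simp [dotProduct_zero]
  -- midpoint-convexity consequence : 2 φ(t) ≤ φ(t+t)
  have hDpos0 : ∀ t : Fin d → ℝ, 2 * φ t ≤ φ (t + t) := by
    intro t
    have hsq : Integrable (fun ω => Real.exp (X ω ⬝ᵥ t) ^ 2) P := by
      refine (hint (t + t)).congr (Filter.Eventually.of_forall fun ω => ?_)
      show Real.exp (X ω ⬝ᵥ (t + t)) = Real.exp (X ω ⬝ᵥ t) ^ 2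
      rw [dotProduct_add, Real.exp_add, sq]
    have hmem : MemLp (fun ω => Real.exp (X ω ⬝ᵥ t)) 2 P :=
      (memLp_two_iff_integrable_sq (hint t).aestronglyMeasurable).2 hsq
    have hv := ProbabilityTheory.variance_nonneg (fun ω => Real.exp (X ω ⬝ᵥ t)) P
    rw [ProbabilityTheory.variance_eq_sub hmem] at hv
    have he : (∫ ω, ((fun ω => Real.exp (X ω ⬝ᵥ t)) ^ 2) ω ∂P)
        = ∫ ω, Real.exp (X ω ⬝ᵥ (t + t)) ∂P := by
      refine integral_congr_ae (Filter.Eventually.of_forall fun ω => ?_)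
      simp [Pi.pow_apply, dotProduct_add, Real.exp_add, sq]
    have h2 : (∫ ω, Real.exp (X ω ⬝ᵥ t) ∂P) ^ 2 ≤ ∫ ω, Real.exp (X ω ⬝ᵥ (t + t)) ∂P := by
      simp only [Pi.pow_apply] at hv he
      linarith
    have hlog := Real.log_le_log (pow_pos (hP t) 2) h2
    rw [Real.log_pow] at hlog
    rw [hφ t, hφ (t + t)]
    push_cast at hlog
    linarith
  -- the second-difference function D
  obtain ⟨D, hD⟩ : ∃ D : (Fin d → ℝ) → (Fin d → ℝ) → ℝ,
      D = fun h t => φ (t + h) - φ t - φ h + φ 0 := ⟨_, rfl⟩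
  have hsymm : ∀ h t, D h t = D t h := by
    intro h t; simp only [hD]; rw [add_comm]; ring
  have hA : ∀ (t₁ t₂ h : Fin d → ℝ) (δ : ℝ), δ ∈ Set.Icc (0:ℝ) 1 →
      φ ((1 - δ) • t₁ + δ • t₂ + h) - φ ((1 - δ) • t₁ + δ • t₂)
        = (1 - δ) * (φ (t₁ + h) - φ t₁) + δ * (φ (t₂ + h) - φ t₂) := by
    intro t₁ t₂ h δ hδ
    have h1 := hstat t₁ t₂ h δ hδ
    linarith [h1]
  have hhom : ∀ (h s : Fin d → ℝ) (δ : ℝ), δ ∈ Set.Icc (0:ℝ) 1 → D h (δ • s) = δ * D h s := by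
    intro h s δ hδ
    have h1 := hA 0 s h δ hδ
    simp only [smul_zero, zero_add] at h1
    simp only [hD]
    linear_combination h1
  have hmid : ∀ (h u v : Fin d → ℝ), D h ((1/2 : ℝ) • (u + v)) = (D h u + D h v) / 2 := by
    intro h u v
    have h1 := hA u v h (1/2) (by norm_num)
    have harg : (1 - 1/2 : ℝ) • u + (1/2 : ℝ) • v = (1/2 : ℝ) • (u + v) := by
      rw [smul_add]; norm_num
    rw [harg] at h1
    simp only [hD]
    linear_combination h1
  have hadd : ∀ (h u v : Fin d → ℝ), D h (u + v) = D h u + D h v := by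
    intro h u v
    have h1 := hmid h u v
    have h2 := hhom h (u + v) (1/2) (by norm_num)
    linarith
  have hzeroD : ∀ h, D h 0 = 0 := by
    intro h
    have h1 := hhom h 0 0 (by norm_num : (0:ℝ) ∈ Set.Icc (0:ℝ) 1)
    simpa using h1
  have hneg : ∀ h v, D h (-v) = - D h v := by
    intro h v
    have h1 := hadd h v (-v)
    simp only [add_neg_cancel, hzeroD h] at h1
    linarith
  have hsmul : ∀ (h s : Fin d → ℝ) (c : ℝ), D h (c • s) = c * D h s := by
    have hnn : ∀ (h s : Fin d → ℝ) (c : ℝ), 0 ≤ c → D h (c • s) = c * D h s := by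
      intro h s c hc
      rcases le_total c 1 with h1 | h1
      · exact hhom h s c ⟨hc, h1⟩
      · have hc0 : 0 < c := lt_of_lt_of_le one_pos h1
        have hi : (1/c : ℝ) ∈ Set.Icc (0:ℝ) 1 :=
          ⟨by positivity, by rw [div_le_one hc0]; exact h1⟩
        have h2 := hhom h (c • s) (1/c) hi
        rw [smul_smul, one_div_mul_cancel hc0.ne', one_smul] at h2
        rw [h2, ← mul_assoc, mul_one_div_cancel hc0.ne', one_mul]
    intro h s c
    rcases le_total 0 c with hc | hc
    · exact hnn h s c hc
    · have h1 : D h (c • s) = D h (-((-c) • s)) := by rw [neg_smul, neg_neg]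
      rw [h1, hneg, hnn h s (-c) (by linarith)]
      ring
  -- D is given by a matrix
  obtain ⟨e, he⟩ : ∃ e : Fin d → (Fin d → ℝ),
      e = fun i j => if i = j then 1 else 0 := ⟨_, rfl⟩
  have hexp : ∀ h t, D h t = ∑ i, t i * D h (e i) := by
    intro h t
    let L : (Fin d → ℝ) →ₗ[ℝ] ℝ :=
      { toFun := D h
        map_add' := hadd h
        map_smul' := fun c s => by simpa [smul_eq_mul] using hsmul h s c }
    have hL : ∀ t, L t = D h t := fun _ => rfl
    rw [← hL, LinearMap.pi_apply_eq_sum_univ]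
    simp [hL, he, smul_eq_mul]
  obtain ⟨S, hS⟩ : ∃ S : Matrix (Fin d) (Fin d) ℝ,
      S = Matrix.of fun i j => D (e i) (e j) := ⟨_, rfl⟩
  have hDS : ∀ s t : Fin d → ℝ, D s t = s ⬝ᵥ S.mulVec t := by
    intro s t
    rw [hexp s t]
    have h1 : ∀ j, D s (e j) = ∑ i, s i * D (e i) (e j) := by
      intro j
      rw [hsymm s (e j), hexp (e j) s]
      exact Finset.sum_congr rfl fun i _ => by rw [hsymm (e j) (e i)]
    simp only [h1, dotProduct, Matrix.mulVec, Finset.mul_sum, hS, Matrix.of_apply]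
    rw [Finset.sum_comm]
    exact Finset.sum_congr rfl fun i _ => Finset.sum_congr rfl fun j _ => by ring
  -- the linear part ψ
  have hφadd : ∀ u v, φ (u + v) = φ u + φ v + D v u := by
    intro u v
    simp only [hD, hφ0]
    ring
  obtain ⟨ψ, hψ⟩ : ∃ ψ : (Fin d → ℝ) → ℝ,
      ψ = fun t => φ t - (1/2) * D t t := ⟨_, rfl⟩
  have hψadd : ∀ u v, ψ (u + v) = ψ u + ψ v := by
    intro u v
    have h1 : D (u + v) (u + v) = (D u u + D u v) + (D v u + D v v) := by
      rw [hadd (u + v) u v, hsymm (u + v) u, hsymm (u + v) v, hadd u u v, hadd v u v]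
    have h2 := hφadd u v
    have h3 := hsymm u v
    simp only [hψ]
    linarith
  have hψ0 : ψ 0 = 0 := by simp only [hψ, hφ0, hzeroD]; ring
  -- boundedness of ψ along coordinate rays
  have hφbd : ∀ (w : Fin d → ℝ) (r : ℝ), r ∈ Set.Icc (0:ℝ) 1 →
      φ (r • w) ≤ Real.log (1 + ∫ ω, Real.exp (X ω ⬝ᵥ w) ∂P) := by
    intro w r hr
    have hpt : ∀ ω, Real.exp (X ω ⬝ᵥ (r • w)) ≤ 1 + Real.exp (X ω ⬝ᵥ w) := by
      intro ω
      have hd : X ω ⬝ᵥ (r • w) = r * (X ω ⬝ᵥ w) := by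
        rw [dotProduct_smul, smul_eq_mul]
      rw [hd]
      rcases le_total (X ω ⬝ᵥ w) 0 with hy | hy
      · have : r * (X ω ⬝ᵥ w) ≤ 0 := mul_nonpos_of_nonneg_of_nonpos hr.1 hy
        have h2 := Real.exp_le_one_iff.2 this
        linarith [Real.exp_pos (X ω ⬝ᵥ w)]
      · have : r * (X ω ⬝ᵥ w) ≤ X ω ⬝ᵥ w := by nlinarith [hr.2]
        have h2 := Real.exp_le_exp.2 this
        linarith
    have hle : (∫ ω, Real.exp (X ω ⬝ᵥ (r • w)) ∂P) ≤ ∫ ω, (1 + Real.exp (X ω ⬝ᵥ w)) ∂P :=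
      integral_mono (hint (r • w)) ((integrable_const 1).add (hint w)) hpt
    have hconst : (∫ ω, (1 + Real.exp (X ω ⬝ᵥ w)) ∂P)
        = 1 + ∫ ω, Real.exp (X ω ⬝ᵥ w) ∂P := by
      rw [integral_add (integrable_const 1) (hint w)]
      simp
    rw [hφ (r • w)]
    exact Real.log_le_log (hP (r • w)) (by rw [← hconst]; exact hle)
  have hψhom : ∀ (i : Fin d) (r : ℝ), ψ (r • e i) = r * ψ (e i) := by
    intro i r
    have hgadd : ∀ a b : ℝ, ψ ((a + b) • e i) = ψ (a • e i) + ψ (b • e i) := by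
      intro a b
      rw [add_smul, hψadd]
    have hDsq : ∀ (x : Fin d → ℝ) (c : ℝ), D (c • x) (c • x) = c * (c * D x x) := by
      intro x c
      rw [hsmul (c • x) x c, hsymm (c • x) x, hsmul x x c]
    have hbd : ∀ s ∈ Set.Icc (0:ℝ) 1, ψ (s • e i)
        ≤ Real.log (1 + ∫ ω, Real.exp (X ω ⬝ᵥ e i) ∂P) := by
      intro s hs
      have h1 := hφbd (e i) s hs
      have h2 : 0 ≤ D (s • e i) (s • e i) := by
        have h3 := hDpos0 (s • e i)
        simp only [hD]
        linarith [hφ0]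
      simp only [hψ]
      linarith
    have := cauchy_linear (fun s => ψ (s • e i)) hgadd _ hbd r
    simpa [one_smul] using this
  -- assemble
  refine ⟨fun i => ψ (e i), S, ?_, ?_, ?_⟩
  · ext i j
    simp only [Matrix.transpose_apply, hS, Matrix.of_apply]
    exact hsymm (e j) (e i)
  · rw [Matrix.posSemidef_iff_dotProduct_mulVec]; constructor
    · ext i j
      simp only [Matrix.conjTranspose_apply, hS, Matrix.of_apply, star_trivial]
      exact hsymm (e j) (e i)
    · intro x
      have h1 : 0 ≤ D x x := by
        have h3 := hDpos0 x
        simp only [hD]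
        linarith [hφ0]
      rw [hDS x x] at h1
      simpa [star_trivial] using h1
  · intro t
    have ht : t = ∑ i, t i • e i := by
      simpa [he] using pi_eq_sum_univ t
    have hΨ : ψ t = ∑ i, t i * ψ (e i) := by
      have hmap : ψ (∑ i, t i • e i) = ∑ i, ψ (t i • e i) := by
        exact map_sum (AddMonoidHom.mk' ψ hψadd) (fun i => t i • e i) Finset.univ
      conv_lhs => rw [ht]
      rw [hmap]
      exact Finset.sum_congr rfl fun i _ => hψhom i (t i)
    have hdot : (fun i => ψ (e i)) ⬝ᵥ t = ∑ i, t i * ψ (e i) := by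
      simp only [dotProduct]
      exact Finset.sum_congr rfl fun i _ => by ring
    have hfin : φ t = ψ t + (1/2) * D t t := by simp only [hψ]; ring
    rw [hfin, hΨ, hdot, hDS t t]
end

section
/- Let X be a random vector in ℝ^d whose cumulant generating function φ(t) = log E[exp⟨X,t⟩] is finite for every t ∈ ℝ^d, and suppose that for all t₁, t₂, h ∈ ℝ^d and all δ ∈ [0,1], φ((1−δ)t₁ + δt₂) − (1−δ)φ(t₁) − δφ(t₂) = φ((1−δ)t₁ + δt₂ + h) − (1−δ)φ(t₁ + h) − δφ(t₂ + h). Then the law of X is the multivariate Gaussian distribution on ℝ^d with some mean vector μ ∈ ℝ^d and some symmetric positive semidefinite covariance matrix Σ. -/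
open MeasureTheory Matrix Real

/-- A probability measure `ν` on `ℝ^d` is the multivariate Gaussian distribution with mean `μ`
and symmetric positive semidefinite covariance matrix `S` iff it is characterized by its
moment generating function `t ↦ exp(⟨μ,t⟩ + ½⟨t,St⟩)`. -/
def IsMultivariateGaussian {d : ℕ} (ν : Measure (Fin d → ℝ))
    (μ : Fin d → ℝ) (S : Matrix (Fin d) (Fin d) ℝ) : Prop :=
  IsProbabilityMeasure ν ∧
    ∀ t : Fin d → ℝ, ∫ x, Real.exp (x ⬝ᵥ t) ∂ν = Real.exp (μ ⬝ᵥ t + (1 / 2) * (t ⬝ᵥ S.mulVec t))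

/-- If the everywhere-finite cumulant generating function of a random vector
`X` in `ℝ^d` satisfies the two-point shift-invariance identity, then the law of `X` is a
multivariate Gaussian distribution with some mean `μ` and some symmetric positive semidefinite
covariance matrix `Σ`. -/
theorem stmt_2 {Ω : Type*} [MeasurableSpace Ω] (P : Measure Ω) [IsProbabilityMeasure P]
    {d : ℕ} (X : Ω → (Fin d → ℝ)) (hX : Measurable X)
    (hint : ∀ t : Fin d → ℝ, Integrable (fun ω => Real.exp (X ω ⬝ᵥ t)) P)
    (φ : (Fin d → ℝ) → ℝ)
    (hφ : ∀ t, φ t = Real.log (∫ ω, Real.exp (X ω ⬝ᵥ t) ∂P))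
    (hstat : ∀ (t₁ t₂ h : Fin d → ℝ) (δ : ℝ), δ ∈ Set.Icc (0 : ℝ) 1 →
      φ ((1 - δ) • t₁ + δ • t₂) - (1 - δ) * φ t₁ - δ * φ t₂
        = φ ((1 - δ) • t₁ + δ • t₂ + h) - (1 - δ) * φ (t₁ + h) - δ * φ (t₂ + h)) :
    ∃ (μ : Fin d → ℝ) (S : Matrix (Fin d) (Fin d) ℝ), S.IsSymm ∧ S.PosSemidef ∧
      IsMultivariateGaussian (P.map X) μ S := by
  classical
  have hPne : NeZero P := ⟨IsProbabilityMeasure.ne_zero P⟩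
  set M : (Fin d → ℝ) → ℝ := fun t => ∫ ω, Real.exp (X ω ⬝ᵥ t) ∂P with hMdef
  have hMpos : ∀ t, 0 < M t := fun t => integral_exp_pos (hint t)
  have hφM : ∀ t, φ t = Real.log (M t) := hφ
  have hMexp : ∀ t, M t = Real.exp (φ t) := by
    intro t; rw [hφM t, Real.exp_log (hMpos t)]
  have hφ0 : φ 0 = 0 := by
    have : M 0 = 1 := by
      simp [hMdef, dotProduct_zero]
    rw [hφM, this, Real.log_one]
  -- Cauchy–Schwarz : (M t)^2 ≤ M (t+t)
  have hCS : ∀ t, (M t) ^ 2 ≤ M (t + t) := by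
    intro t
    have hff : (fun ω => Real.exp (X ω ⬝ᵥ t) ^ 2) = fun ω => Real.exp (X ω ⬝ᵥ (t + t)) := by
      funext ω; rw [dotProduct_add, Real.exp_add]; ring
    have hint2 : Integrable (fun ω => Real.exp (X ω ⬝ᵥ t) ^ 2) P := by
      rw [hff]; exact hint (t + t)
    have h0 : 0 ≤ ∫ ω, (Real.exp (X ω ⬝ᵥ t) - M t) ^ 2 ∂P :=
      integral_nonneg fun ω => sq_nonneg _
    have hsub : Integrable (fun ω => Real.exp (X ω ⬝ᵥ (t + t))
        - 2 * M t * Real.exp (X ω ⬝ᵥ t)) P := (hint (t + t)).sub ((hint t).const_mul _)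
    have hexpand : ∫ ω, (Real.exp (X ω ⬝ᵥ t) - M t) ^ 2 ∂P
        = M (t + t) - 2 * M t * M t + M t ^ 2 := by
      have hc : (fun ω => (Real.exp (X ω ⬝ᵥ t) - M t) ^ 2)
          = fun ω => (Real.exp (X ω ⬝ᵥ (t + t)) - 2 * M t * Real.exp (X ω ⬝ᵥ t)) + M t ^ 2 := by
        funext ω; rw [dotProduct_add, Real.exp_add]; ring
      rw [hc, integral_add hsub (integrable_const _),
        integral_sub (hint (t + t)) ((hint t).const_mul _), integral_const_mul, integral_const]
      simp only [hMdef, measure_univ, probReal_univ, ENNReal.toReal_one, smul_eq_mul, one_mul]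
    nlinarith [h0, hexpand, hMpos t]
  have hDpos0 : ∀ t, 2 * φ t ≤ φ (t + t) := by
    intro t
    rw [hφM, hφM]
    calc 2 * Real.log (M t) = Real.log ((M t) ^ 2) := by
          rw [Real.log_pow]; push_cast; ring
      _ ≤ Real.log (M (t + t)) :=
          Real.log_le_log (pow_pos (hMpos t) 2) (hCS t)
  -- the symmetric "second difference"
  set D : (Fin d → ℝ) → (Fin d → ℝ) → ℝ := fun x y => φ (x + y) - φ x - φ y with hDdef
  have hDsymm : ∀ x y, D x y = D y x := by
    intro x y; simp only [hDdef]; rw [add_comm]; ring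
  have hD0 : ∀ h, D 0 h = 0 := by
    intro h; simp only [hDdef, zero_add, hφ0]; ring
  have haff : ∀ (t₁ t₂ h : Fin d → ℝ) (δ : ℝ), δ ∈ Set.Icc (0:ℝ) 1 →
      D ((1 - δ) • t₁ + δ • t₂) h = (1 - δ) * D t₁ h + δ * D t₂ h := by
    intro t₁ t₂ h δ hδ
    simp only [hDdef]
    linear_combination -(hstat t₁ t₂ h δ hδ)
  have hadd : ∀ (h a b : Fin d → ℝ), D (a + b) h = D a h + D b h := by
    intro h a b
    have e1 := haff a b h (1/2) (by norm_num)
    have e2 := haff (a + b) 0 h (1/2) (by norm_num)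
    have hpt : (1 - (1/2:ℝ)) • (a + b) + (1/2:ℝ) • (0 : Fin d → ℝ)
        = (1 - (1/2:ℝ)) • a + (1/2:ℝ) • b := by module
    rw [hpt] at e2
    rw [hD0] at e2
    linear_combination 2 * e1 - 2 * e2
  have hDneg : ∀ h t, D (-t) h = - D t h := by
    intro h t
    have := hadd h t (-t)
    rw [add_neg_cancel, hD0] at this
    linarith
  have hhom01 : ∀ (h t : Fin d → ℝ) (δ : ℝ), δ ∈ Set.Icc (0:ℝ) 1 →
      D (δ • t) h = δ * D t h := by
    intro h t δ hδ
    have := haff 0 t h δ hδ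
    have hpt : (1 - δ) • (0 : Fin d → ℝ) + δ • t = δ • t := by module
    rw [hpt, hD0] at this
    linarith
  have hnsmul : ∀ (h t : Fin d → ℝ) (n : ℕ), D ((n : ℝ) • t) h = n * D t h := by
    intro h t n
    induction n with
    | zero => simp only [Nat.cast_zero, zero_smul]; rw [hD0]; ring
    | succ n ih =>
      have : ((n + 1 : ℕ) : ℝ) • t = (n : ℝ) • t + t := by push_cast; rw [add_smul, one_smul]
      rw [this, hadd, ih]; push_cast; ring
  have hhom : ∀ (h t : Fin d → ℝ) (c : ℝ), D (c • t) h = c * D t h := by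
    intro h t c
    rcases le_or_gt 0 c with hc | hc
    · set n : ℕ := ⌊c⌋₊ + 1 with hn
      have hn0 : (0:ℝ) < n := by positivity
      have hcn : c ≤ (n : ℝ) := le_of_lt (by exact_mod_cast Nat.lt_floor_add_one c)
      have hmem : c / n ∈ Set.Icc (0:ℝ) 1 :=
        ⟨div_nonneg hc hn0.le, (div_le_one hn0).mpr hcn⟩
      have hct : c • t = (n : ℝ) • ((c / n) • t) := by
        rw [smul_smul, mul_div_cancel₀ _ hn0.ne']
      rw [hct, hnsmul, hhom01 h t _ hmem]
      field_simp
    · have h1 : c • t = -((-c) • t) := by module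
      rw [h1, hDneg]
      rcases le_or_gt 0 (-c) with h2 | h2
      · -- reuse nonneg case
        set n : ℕ := ⌊-c⌋₊ + 1 with hn
        have hn0 : (0:ℝ) < n := by positivity
        have hcn : -c ≤ (n : ℝ) := le_of_lt (by exact_mod_cast Nat.lt_floor_add_one (-c))
        have hmem : -c / n ∈ Set.Icc (0:ℝ) 1 :=
          ⟨div_nonneg h2 hn0.le, (div_le_one hn0).mpr hcn⟩
        have hct : (-c) • t = (n : ℝ) • ((-c / n) • t) := by
          rw [smul_smul, mul_div_cancel₀ _ hn0.ne']
        rw [hct, hnsmul, hhom01 h t _ hmem]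
        field_simp
      · linarith
  -- continuity along lines
  have hMline : ∀ t : Fin d → ℝ, Continuous fun s : ℝ => M (s • t) := by
    intro t
    have hrw : ∀ s : ℝ, M (s • t) = ∫ ω, Real.exp (s * (X ω ⬝ᵥ t)) ∂P := by
      intro s
      simp only [hMdef]
      congr 1; funext ω; rw [dotProduct_smul]; rfl
    rw [continuous_iff_continuousAt]
    intro s₀
    have : (fun s : ℝ => M (s • t)) = fun s => ∫ ω, Real.exp (s * (X ω ⬝ᵥ t)) ∂P :=
      funext hrw
    rw [this]
    have hintc : ∀ c : ℝ, Integrable (fun ω => Real.exp (c * (X ω ⬝ᵥ t))) P := by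
      intro c
      have := hint (c • t)
      have hfe : (fun ω => Real.exp (X ω ⬝ᵥ (c • t))) = fun ω => Real.exp (c * (X ω ⬝ᵥ t)) := by
        funext ω; rw [dotProduct_smul]; rfl
      rwa [hfe] at this
    apply continuousAt_of_dominated
      (bound := fun ω => Real.exp ((s₀ - 1) * (X ω ⬝ᵥ t)) + Real.exp ((s₀ + 1) * (X ω ⬝ᵥ t)))
    · exact Filter.Eventually.of_forall fun s => (hintc s).aestronglyMeasurable
    · have hball : Set.Ioo (s₀ - 1) (s₀ + 1) ∈ nhds s₀ :=
        Ioo_mem_nhds (by linarith) (by linarith)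
      filter_upwards [hball] with s hs
      filter_upwards with ω
      rw [Real.norm_eq_abs, Real.abs_exp]
      rcases le_or_gt 0 (X ω ⬝ᵥ t) with hY | hY
      · have : s * (X ω ⬝ᵥ t) ≤ (s₀ + 1) * (X ω ⬝ᵥ t) :=
          mul_le_mul_of_nonneg_right hs.2.le hY
        calc Real.exp (s * (X ω ⬝ᵥ t)) ≤ Real.exp ((s₀ + 1) * (X ω ⬝ᵥ t)) := Real.exp_le_exp.mpr this
          _ ≤ _ := le_add_of_nonneg_left (Real.exp_pos _).le
      · have : s * (X ω ⬝ᵥ t) ≤ (s₀ - 1) * (X ω ⬝ᵥ t) := by nlinarith [hs.1, hY]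
        calc Real.exp (s * (X ω ⬝ᵥ t)) ≤ Real.exp ((s₀ - 1) * (X ω ⬝ᵥ t)) := Real.exp_le_exp.mpr this
          _ ≤ _ := le_add_of_nonneg_right (Real.exp_pos _).le
    · exact (hintc (s₀ - 1)).add (hintc (s₀ + 1))
    · filter_upwards with ω
      exact (Real.continuous_exp.comp (continuous_id.mul continuous_const)).continuousAt
  have hφline : ∀ t : Fin d → ℝ, Continuous fun s : ℝ => φ (s • t) := by
    intro t
    have : (fun s : ℝ => φ (s • t)) = fun s => Real.log (M (s • t)) := funext fun s => hφM _
    rw [this]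
    exact (hMline t).log fun s => (hMpos _).ne'
  -- scaling identity for φ
  have hφsmul : ∀ (t : Fin d → ℝ) (c : ℝ), φ (c • t) = c * φ t + (c ^ 2 - c) / 2 * D t t := by
    intro t c
    set ρ : ℝ → ℝ := fun s => φ (s • t) - s ^ 2 / 2 * D t t with hρdef
    have hρadd : ∀ a b : ℝ, ρ (a + b) = ρ a + ρ b := by
      intro a b
      have h1 : φ ((a + b) • t) = φ (a • t) + φ (b • t) + D (a • t) (b • t) := by
        simp only [hDdef]; rw [add_smul]; ring
      have h2 : D (a • t) (b • t) = a * (b * D t t) := by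
        rw [hhom, hDsymm, hhom, hDsymm]
      simp only [hρdef]
      rw [h1, h2]; ring
    have hρcont : Continuous ρ :=
      (hφline t).sub (((continuous_pow 2).div_const 2).mul continuous_const)
    set F : ℝ →+ ℝ := AddMonoidHom.mk' ρ hρadd with hF
    have hco : ⇑(F.toRealLinearMap hρcont) = ρ := AddMonoidHom.coe_toRealLinearMap F hρcont
    have h1 : ρ (c • (1 : ℝ)) = c • ρ 1 := by
      rw [← hco]; exact (F.toRealLinearMap hρcont).map_smul c (1 : ℝ)
    simp only [smul_eq_mul, mul_one, hρdef, one_smul] at h1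
    linear_combination h1
  -- the linear part
  set r : (Fin d → ℝ) → ℝ := fun u => φ u - D u u / 2 with hrdef
  have hradd : ∀ a b, r (a + b) = r a + r b := by
    intro a b
    have h1 : φ (a + b) = φ a + φ b + D a b := by simp only [hDdef]; ring
    have h2 : D (a + b) (a + b) = D a a + D b b + 2 * D a b := by
      rw [hadd]
      rw [hDsymm a (a+b), hadd, hDsymm b (a+b), hadd]
      rw [hDsymm a b]; ring
    simp only [hrdef]; rw [h1, h2]; ring
  have hrsmul : ∀ (c : ℝ) (u), r (c • u) = c * r u := by
    intro c u
    have h2 : D (c • u) (c • u) = c ^ 2 * D u u := by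
      rw [hhom, hDsymm, hhom, hDsymm]; ring
    simp only [hrdef]
    rw [hφsmul, h2]; ring
  set L : (Fin d → ℝ) →ₗ[ℝ] ℝ :=
    { toFun := r, map_add' := hradd, map_smul' := fun c u => by simpa using hrsmul c u } with hL
  set b : Fin d → (Fin d → ℝ) := fun i j => if i = j then 1 else 0 with hb
  set μ : Fin d → ℝ := fun i => r (b i) with hμ
  set S : Matrix (Fin d) (Fin d) ℝ := Matrix.of fun i j => D (b i) (b j) with hS
  -- linear expansion of r
  have hrexp : ∀ t, r t = μ ⬝ᵥ t := by
    intro t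
    have := L.pi_apply_eq_sum_univ t
    simp only [hL, LinearMap.coe_mk, AddHom.coe_mk, smul_eq_mul] at this
    rw [dotProduct]
    rw [this]
    exact Finset.sum_congr rfl fun i _ => by rw [hμ]; ring
  -- bilinear expansion of D
  have hDlin1 : ∀ y : Fin d → ℝ, ∃ Ly : (Fin d → ℝ) →ₗ[ℝ] ℝ, ∀ x, Ly x = D x y := by
    intro y
    refine ⟨LinearMap.mk (AddHom.mk (fun x => D x y) fun a c => hadd y a c) ?_, fun x => rfl⟩
    intro c u
    simpa using hhom y u c
  have hDexp1 : ∀ (x y : Fin d → ℝ), D x y = ∑ i, x i * D (b i) y := by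
    intro x y
    obtain ⟨Ly, hLy⟩ := hDlin1 y
    rw [← hLy, Ly.pi_apply_eq_sum_univ]
    exact Finset.sum_congr rfl fun i _ => by rw [hLy, hb, smul_eq_mul]
  have hquad : ∀ t, t ⬝ᵥ S.mulVec t = D t t := by
    intro t
    rw [hDexp1 t t, dotProduct]
    refine Finset.sum_congr rfl fun i _ => ?_
    rw [hDsymm (b i) t, hDexp1 t (b i)]
    have hmv : S.mulVec t i = ∑ j, S i j * t j := rfl
    rw [hmv, Finset.mul_sum, Finset.mul_sum]
    refine Finset.sum_congr rfl fun j _ => ?_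
    simp only [hS, Matrix.of_apply]
    rw [hDsymm (b j) (b i)]; ring
  have hφeq : ∀ t, φ t = μ ⬝ᵥ t + (1/2) * (t ⬝ᵥ S.mulVec t) := by
    intro t
    rw [hquad, ← hrexp]
    simp only [hrdef]; ring
  refine ⟨μ, S, ?_, ?_, ?_⟩
  · -- symm
    rw [Matrix.IsSymm]
    ext i j
    simp only [Matrix.transpose_apply, hS, Matrix.of_apply]
    exact hDsymm (b j) (b i)
  · -- posSemidef
    rw [Matrix.posSemidef_iff_dotProduct_mulVec]
    constructor
    · rw [Matrix.IsHermitian]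
      ext i j
      simp only [Matrix.conjTranspose_apply, hS, Matrix.of_apply, star_trivial]
      exact hDsymm (b j) (b i)
    · intro x
      have : star x ⬝ᵥ S *ᵥ x = x ⬝ᵥ S.mulVec x := by simp [star_trivial]
      rw [this, hquad]
      have := hDpos0 x
      simp only [hDdef]
      linarith
  · unfold IsMultivariateGaussian
    refine ⟨Measure.isProbabilityMeasure_map hX.aemeasurable, fun t => ?_⟩
    have hmeas : AEStronglyMeasurable (fun x : Fin d → ℝ => Real.exp (x ⬝ᵥ t)) (P.map X) := by
      apply Continuous.aestronglyMeasurable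
      apply Real.continuous_exp.comp
      simp only [dotProduct]
      exact continuous_finset_sum _ fun i _ => (continuous_apply i).mul continuous_const
    rw [integral_map hX.aemeasurable hmeas]
    rw [show (∫ ω, Real.exp (X ω ⬝ᵥ t) ∂P) = M t from rfl, hMexp, hφeq]
end

section
/- Let φ : ℝ^d → ℝ be differentiable and satisfy, for all t₁, t₂, h ∈ ℝ^d and all δ ∈ [0,1], φ((1−δ)t₁ + δt₂) − (1−δ)φ(t₁) − δφ(t₂) = φ((1−δ)t₁ + δt₂ + h) − (1−δ)φ(t₁ + h) − δφ(t₂ + h). Then for all t₁, t₂ ∈ ℝ^d and δ ∈ [0,1], the gradient satisfies ∇φ((1−δ)t₁ + δt₂) = (1−δ)∇φ(t₁) + δ∇φ(t₂). -/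
open Set

/-- If a differentiable `φ : ℝ^d → ℝ` satisfies the two-point shift-invariance
identity, then its gradient is affine along segments: `∇φ((1−δ)t₁ + δt₂) = (1−δ)∇φ(t₁) + δ∇φ(t₂)`. -/
theorem stmt_4 {d : ℕ} (φ : EuclideanSpace ℝ (Fin d) → ℝ) (hdiff : Differentiable ℝ φ)
    (hstat : ∀ (t₁ t₂ h : EuclideanSpace ℝ (Fin d)) (δ : ℝ), δ ∈ Set.Icc (0 : ℝ) 1 →
      φ ((1 - δ) • t₁ + δ • t₂) - (1 - δ) * φ t₁ - δ * φ t₂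
        = φ ((1 - δ) • t₁ + δ • t₂ + h) - (1 - δ) * φ (t₁ + h) - δ * φ (t₂ + h)) :
    ∀ (t₁ t₂ : EuclideanSpace ℝ (Fin d)) (δ : ℝ), δ ∈ Set.Icc (0 : ℝ) 1 →
      gradient φ ((1 - δ) • t₁ + δ • t₂) = (1 - δ) • gradient φ t₁ + δ • gradient φ t₂ := by
  intro t₁ t₂ δ hδ
  set c := (1 - δ) • t₁ + δ • t₂ with hc
  -- The function F is constant
  have hconst : ∀ h : EuclideanSpace ℝ (Fin d),
      φ (c + h) - (1 - δ) * φ (t₁ + h) - δ * φ (t₂ + h)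
        = φ c - (1 - δ) * φ t₁ - δ * φ t₂ := by
    intro h
    exact (hstat t₁ t₂ h δ hδ).symm
  -- derivatives
  have hφc : HasFDerivAt (fun h : EuclideanSpace ℝ (Fin d) => φ (c + h))
      (fderiv ℝ φ c) 0 := by
    have h1 : HasFDerivAt φ (fderiv ℝ φ c) (c + id (0 : EuclideanSpace ℝ (Fin d))) := by
      simpa using (hdiff c).hasFDerivAt
    have := h1.comp (0 : EuclideanSpace ℝ (Fin d))
      ((hasFDerivAt_id (0 : EuclideanSpace ℝ (Fin d))).const_add c)
    simpa [Function.comp_def] using this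
  have hφ1 : HasFDerivAt (fun h : EuclideanSpace ℝ (Fin d) => φ (t₁ + h))
      (fderiv ℝ φ t₁) 0 := by
    have h1 : HasFDerivAt φ (fderiv ℝ φ t₁) (t₁ + id (0 : EuclideanSpace ℝ (Fin d))) := by
      simpa using (hdiff t₁).hasFDerivAt
    have := h1.comp (0 : EuclideanSpace ℝ (Fin d))
      ((hasFDerivAt_id (0 : EuclideanSpace ℝ (Fin d))).const_add t₁)
    simpa [Function.comp_def] using this
  have hφ2 : HasFDerivAt (fun h : EuclideanSpace ℝ (Fin d) => φ (t₂ + h))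
      (fderiv ℝ φ t₂) 0 := by
    have h1 : HasFDerivAt φ (fderiv ℝ φ t₂) (t₂ + id (0 : EuclideanSpace ℝ (Fin d))) := by
      simpa using (hdiff t₂).hasFDerivAt
    have := h1.comp (0 : EuclideanSpace ℝ (Fin d))
      ((hasFDerivAt_id (0 : EuclideanSpace ℝ (Fin d))).const_add t₂)
    simpa [Function.comp_def] using this
  have hF : HasFDerivAt (fun h : EuclideanSpace ℝ (Fin d) =>
      φ (c + h) - (1 - δ) * φ (t₁ + h) - δ * φ (t₂ + h))
      (fderiv ℝ φ c - (1 - δ) • fderiv ℝ φ t₁ - δ • fderiv ℝ φ t₂) 0 :=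
    (hφc.sub (hφ1.const_mul (1 - δ))).sub (hφ2.const_mul δ)
  have hF0 : HasFDerivAt (fun h : EuclideanSpace ℝ (Fin d) =>
      φ (c + h) - (1 - δ) * φ (t₁ + h) - δ * φ (t₂ + h))
      (0 : EuclideanSpace ℝ (Fin d) →L[ℝ] ℝ) 0 := by
    have : (fun h : EuclideanSpace ℝ (Fin d) =>
        φ (c + h) - (1 - δ) * φ (t₁ + h) - δ * φ (t₂ + h))
        = fun _ => φ c - (1 - δ) * φ t₁ - δ * φ t₂ := funext hconst
    rw [this]
    exact hasFDerivAt_const _ _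
  have heq : fderiv ℝ φ c - (1 - δ) • fderiv ℝ φ t₁ - δ • fderiv ℝ φ t₂ = 0 :=
    hF.unique hF0
  have hfd : fderiv ℝ φ c = (1 - δ) • fderiv ℝ φ t₁ + δ • fderiv ℝ φ t₂ := by
    rw [sub_sub, sub_eq_zero] at heq
    exact heq
  unfold gradient
  rw [hfd]
  simp
end

section
/- Let X be a random vector in ℝ^d whose cumulant generating function φ(t) = log E[exp⟨X,t⟩] is finite for every t ∈ ℝ^d. Then the following are equivalent: (i) for every n ∈ ℕ, all t₁,…,tₙ ∈ ℝ^d, every h ∈ ℝ^d, and all u₁,…,uₙ ∈ [0,1] with u₁+⋯+uₙ = 1, φ(∑ᵢ uᵢtᵢ) − ∑ᵢ uᵢφ(tᵢ) = φ(h + ∑ᵢ uᵢtᵢ) − ∑ᵢ uᵢφ(tᵢ + h); (ii) there exist μ ∈ ℝ^d and a symmetric positive semidefinite d×d real matrix Σ such that φ(t) = ⟨μ,t⟩ + ½⟨t, Σt⟩ for all t ∈ ℝ^d. -/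
open MeasureTheory Matrix Real Filter
open scoped ENNReal

section Aux

lemma stmt11_meas' {Ω : Type*} [MeasurableSpace Ω] {d : ℕ} {X : Ω → (Fin d → ℝ)}
    (hX : Measurable X) (t : Fin d → ℝ) (c : ℝ) :
    Measurable (fun ω => Real.exp ((X ω ⬝ᵥ t) * c)) := by
  apply Real.measurable_exp.comp
  apply Measurable.mul_const
  apply Finset.measurable_sum
  intro i _
  exact ((measurable_pi_apply i).comp hX).mul_const _

lemma stmt11_meas {Ω : Type*} [MeasurableSpace Ω] {d : ℕ} {X : Ω → (Fin d → ℝ)}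
    (hX : Measurable X) (t : Fin d → ℝ) :
    Measurable (fun ω => Real.exp (X ω ⬝ᵥ t)) := by
  simpa using stmt11_meas' hX t 1

lemma stmt11_convex {Ω : Type*} [MeasurableSpace Ω] (P : Measure Ω) [IsProbabilityMeasure P]
    {d : ℕ} (X : Ω → (Fin d → ℝ)) (hX : Measurable X)
    (hint : ∀ t : Fin d → ℝ, Integrable (fun ω => Real.exp (X ω ⬝ᵥ t)) P)
    (φ : (Fin d → ℝ) → ℝ)
    (hφ : ∀ t, φ t = Real.log (∫ ω, Real.exp (X ω ⬝ᵥ t) ∂P)) :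
    ConvexOn ℝ Set.univ φ := by
  refine convexOn_iff_forall_pos.mpr ⟨convex_univ, fun x _ y _ a b ha hb hab => ?_⟩
  have hMpos : ∀ t : Fin d → ℝ, (0:ℝ) < ∫ ω, Real.exp (X ω ⬝ᵥ t) ∂P :=
    fun t => integral_exp_pos (hint t)
  have e : Real.HolderConjugate (1 / a) (1 / b) := Real.holderConjugate_one_div ha hb hab
  set f : Ω → ℝ := fun ω => Real.exp (X ω ⬝ᵥ x) ^ a with hf
  set g : Ω → ℝ := fun ω => Real.exp (X ω ⬝ᵥ y) ^ b with hg
  have hfnn : 0 ≤ᵐ[P] f := Eventually.of_forall fun ω => Real.rpow_nonneg (Real.exp_pos _).le _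
  have hgnn : 0 ≤ᵐ[P] g := Eventually.of_forall fun ω => Real.rpow_nonneg (Real.exp_pos _).le _
  have hpow : ∀ (c : ℝ), 0 < c → ∀ (t : Fin d → ℝ) (ω : Ω),
      (Real.exp (X ω ⬝ᵥ t) ^ c) ^ (1 / c) = Real.exp (X ω ⬝ᵥ t) := by
    intro c hc t ω
    rw [← Real.rpow_mul (Real.exp_pos _).le, mul_one_div_cancel hc.ne', Real.rpow_one]
  have hmem : ∀ (c : ℝ), 0 < c → ∀ (t : Fin d → ℝ),
      MemLp (fun ω => Real.exp (X ω ⬝ᵥ t) ^ c) (ENNReal.ofReal (1 / c)) P := by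
    intro c hc t
    have A : ENNReal.ofReal (1 / c) ≠ 0 := by
      rwa [Ne, ENNReal.ofReal_eq_zero, not_le, one_div_pos]
    have B : ENNReal.ofReal (1 / c) ≠ ∞ := ENNReal.ofReal_ne_top
    have hmeas : AEStronglyMeasurable (fun ω => Real.exp (X ω ⬝ᵥ t) ^ c) P := by
      have := (stmt11_meas' hX t c).aestronglyMeasurable (μ := P)
      simpa only [Real.exp_mul] using this
    rw [← memLp_norm_rpow_iff hmeas A B, ENNReal.toReal_ofReal (one_div_nonneg.mpr hc.le),
      ENNReal.div_self A B, memLp_one_iff_integrable]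
    apply (hint t).congr
    refine Eventually.of_forall fun ω => ?_
    show Real.exp (X ω ⬝ᵥ t) = ‖Real.exp (X ω ⬝ᵥ t) ^ c‖ ^ (1 / c)
    rw [Real.norm_of_nonneg (Real.rpow_nonneg (Real.exp_pos _).le _), hpow c hc t ω]
  have holder := MeasureTheory.integral_mul_le_Lp_mul_Lq_of_nonneg e hfnn hgnn
    (hmem a ha x) (hmem b hb y)
  rw [one_div_one_div, one_div_one_div] at holder
  have h1 : ∫ ω, f ω * g ω ∂P = ∫ ω, Real.exp (X ω ⬝ᵥ (a • x + b • y)) ∂P := by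
    refine integral_congr_ae (Eventually.of_forall fun ω => ?_)
    show Real.exp (X ω ⬝ᵥ x) ^ a * Real.exp (X ω ⬝ᵥ y) ^ b = _
    rw [← Real.exp_mul, ← Real.exp_mul, ← Real.exp_add]
    congr 1
    simp [dotProduct_add, dotProduct_smul, smul_eq_mul]
    ring
  have h2 : ∫ ω, f ω ^ (1/a) ∂P = ∫ ω, Real.exp (X ω ⬝ᵥ x) ∂P :=
    integral_congr_ae (Eventually.of_forall fun ω => hpow a ha x ω)
  have h3 : ∫ ω, g ω ^ (1/b) ∂P = ∫ ω, Real.exp (X ω ⬝ᵥ y) ∂P :=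
    integral_congr_ae (Eventually.of_forall fun ω => hpow b hb y ω)
  rw [h1, h2, h3] at holder
  rw [hφ, hφ, hφ, smul_eq_mul, smul_eq_mul]
  calc Real.log (∫ ω, Real.exp (X ω ⬝ᵥ (a • x + b • y)) ∂P)
      ≤ Real.log ((∫ ω, Real.exp (X ω ⬝ᵥ x) ∂P) ^ a * (∫ ω, Real.exp (X ω ⬝ᵥ y) ∂P) ^ b) := by
        rw [Real.log_le_log_iff (hMpos _)
          (mul_pos (Real.rpow_pos_of_pos (hMpos _) _) (Real.rpow_pos_of_pos (hMpos _) _))]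
        exact holder
    _ = a * Real.log (∫ ω, Real.exp (X ω ⬝ᵥ x) ∂P)
        + b * Real.log (∫ ω, Real.exp (X ω ⬝ᵥ y) ∂P) := by
        rw [Real.log_mul (Real.rpow_pos_of_pos (hMpos _) _).ne'
          (Real.rpow_pos_of_pos (hMpos _) _).ne', Real.log_rpow (hMpos _),
          Real.log_rpow (hMpos _)]

end Aux

/-- For a random vector `X` in `ℝ^d` with everywhere-finite cumulant
generating function `φ(t) = log E[exp⟨X,t⟩]`, the shift-invariance identity over convex
combinations holds if and only if `φ(t) = ⟨μ,t⟩ + ½⟨t,Σt⟩` for some `μ ∈ ℝ^d` and some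
symmetric positive semidefinite matrix `Σ`. -/
theorem stmt_11 {Ω : Type*} [MeasurableSpace Ω] (P : Measure Ω) [IsProbabilityMeasure P]
    {d : ℕ} (X : Ω → (Fin d → ℝ)) (hX : Measurable X)
    (hint : ∀ t : Fin d → ℝ, Integrable (fun ω => Real.exp (X ω ⬝ᵥ t)) P)
    (φ : (Fin d → ℝ) → ℝ)
    (hφ : ∀ t, φ t = Real.log (∫ ω, Real.exp (X ω ⬝ᵥ t) ∂P)) :
    (∀ (n : ℕ) (t : Fin n → (Fin d → ℝ)) (h : Fin d → ℝ) (u : Fin n → ℝ),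
        (∀ i, u i ∈ Set.Icc (0 : ℝ) 1) → (∑ i, u i) = 1 →
        φ (∑ i, u i • t i) - ∑ i, u i * φ (t i)
          = φ (h + ∑ i, u i • t i) - ∑ i, u i * φ (t i + h))
      ↔ ∃ (μ : Fin d → ℝ) (S : Matrix (Fin d) (Fin d) ℝ), S.IsSymm ∧ S.PosSemidef ∧
          ∀ t : Fin d → ℝ, φ t = μ ⬝ᵥ t + (1 / 2) * (t ⬝ᵥ S.mulVec t) := by
  have hφ0 : φ 0 = 0 := by
    rw [hφ]
    simp
  constructor
  · intro hyp
    have convφ : ConvexOn ℝ Set.univ φ := stmt11_convex P X hX hint φ hφ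
    have contφ : Continuous φ := by
      rw [← continuousOn_univ]
      exact convφ.continuousOn isOpen_univ
    -- the functional equation
    have E : ∀ s r : Fin d → ℝ, φ (s + r) + φ (s - r) = 2 * φ s + φ r + φ (-r) := by
      intro s r
      have h2 := hyp 2 ![r, -r] s ![1/2, 1/2]
        (by intro i; fin_cases i <;> constructor <;> norm_num)
        (by rw [Fin.sum_univ_two]; norm_num)
      have hz : ((1:ℝ)/2) • r + ((1:ℝ)/2) • (-r) = (0 : Fin d → ℝ) := by
        rw [smul_neg]; exact add_neg_cancel _
      rw [Fin.sum_univ_two, Fin.sum_univ_two, Fin.sum_univ_two] at h2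
      simp only [Matrix.cons_val_zero, Matrix.cons_val_one, Matrix.head_cons] at h2
      rw [hz, add_zero, hφ0] at h2
      have e1 : r + s = s + r := add_comm r s
      have e2 : -r + s = s - r := by abel
      rw [e1, e2] at h2
      linarith
    -- odd and even parts
    set A : (Fin d → ℝ) → ℝ := fun t => (φ t - φ (-t)) / 2 with hA
    set Q : (Fin d → ℝ) → ℝ := fun t => (φ t + φ (-t)) / 2 with hQdef
    have hAQ : ∀ t, φ t = A t + Q t := by intro t; simp only [hA, hQdef]; ring
    have hQeven : ∀ t, Q (-t) = Q t := by intro t; simp only [hQdef, neg_neg]; ring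
    have hQ0 : Q 0 = 0 := by simp [hQdef, hφ0]
    have hQnn : ∀ t, 0 ≤ Q t := by
      intro t
      have hc := convφ.2 (Set.mem_univ t) (Set.mem_univ (-t))
        (by norm_num : (0:ℝ) ≤ 1/2) (by norm_num : (0:ℝ) ≤ 1/2) (by norm_num)
      have hz : ((1:ℝ)/2) • t + ((1:ℝ)/2) • (-t) = (0 : Fin d → ℝ) := by
        rw [smul_neg]; exact add_neg_cancel _
      rw [hz, hφ0, smul_eq_mul, smul_eq_mul] at hc
      simp only [hQdef]
      linarith
    -- A is additive
    have hAsub : ∀ s r, A (s - r) = A s - A r := by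
      intro s r
      have h1 := E s r
      have h2 := E r s
      have e1 : r + s = s + r := add_comm r s
      have e2 : r - s = -(s - r) := by abel
      rw [e1, e2] at h2
      simp only [hA]
      linarith
    have hAneg : ∀ r, A (-r) = - A r := by intro r; simp only [hA, neg_neg]; ring
    have hAadd : ∀ s r, A (s + r) = A s + A r := by
      intro s r
      have h := hAsub s (-r)
      rw [sub_neg_eq_add, hAneg] at h
      linarith
    -- Q satisfies the quadratic functional equation
    have hQq : ∀ s r, Q (s + r) + Q (s - r) = 2 * Q s + 2 * Q r := by
      intro s r
      have h1 := E s r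
      have h2 := E (-s) r
      have e1 : -s + r = -(s - r) := by abel
      have e2 : -s - r = -(s + r) := by abel
      rw [e1, e2] at h2
      simp only [hQdef]
      linarith
    -- continuity
    have contA : Continuous A := ((contφ.sub (contφ.comp continuous_neg)).div_const 2)
    have contQ : Continuous Q := ((contφ.add (contφ.comp continuous_neg)).div_const 2)
    -- standard basis vectors
    set e : Fin d → (Fin d → ℝ) := fun i => Pi.single i 1 with hedef
    -- linear representation of additive continuous maps
    have hrepr : ∀ (F : (Fin d → ℝ) → ℝ), (∀ s r, F (s + r) = F s + F r) → Continuous F →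
        ∀ t, F t = ∑ i, t i * F (e i) := by
      intro F Fadd Fcont t
      let FL : (Fin d → ℝ) →L[ℝ] ℝ := (AddMonoidHom.mk' F (fun a b => Fadd a b)).toRealLinearMap Fcont
      have hFL : ∀ v, FL v = F v := fun v =>
        congrFun (AddMonoidHom.coe_toRealLinearMap _ Fcont) v
      have hvec : t = ∑ i, t i • e i := by
        ext j
        rw [Finset.sum_apply]
        simp [hedef, Pi.single_apply]
      calc F t = FL t := (hFL t).symm
        _ = FL (∑ i, t i • e i) := by rw [← hvec]
        _ = ∑ i, t i • FL (e i) := by rw [map_sum]; simp [_root_.map_smul]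
        _ = ∑ i, t i * F (e i) := by simp [hFL, smul_eq_mul]
    -- B is the polarization of Q
    set B : (Fin d → ℝ) → (Fin d → ℝ) → ℝ := fun s r => (Q (s + r) - Q (s - r)) / 4 with hBdef
    have hBsymm : ∀ s r, B s r = B r s := by
      intro s r
      simp only [hBdef]
      have e1 : r + s = s + r := add_comm r s
      have e2 : r - s = -(s - r) := by abel
      rw [e1, e2, hQeven]
    have hBdiag : ∀ t, B t t = Q t := by
      intro t
      have h := hQq t t
      rw [sub_self, hQ0] at h
      simp only [hBdef]
      rw [sub_self, hQ0]
      linarith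
    have hBaddl : ∀ s s' r, B (s + s') r = B s r + B s' r := by
      intro s s' r
      have h1 := hQq (s + r) s'
      have h2 := hQq (s - r) s'
      have h3 := hQq (s' + r) s
      have h4 := hQq (s' - r) s
      have c1 : s + r + s' = s + s' + r := by abel
      have c2 : s + r - s' = s - s' + r := by abel
      have c3 : s - r + s' = s + s' - r := by abel
      have c4 : s - r - s' = s - s' - r := by abel
      have c5 : s' + r + s = s + s' + r := by abel
      have c6 : s' + r - s = -(s - s' - r) := by abel
      have c7 : s' - r + s = s + s' - r := by abel
      have c8 : s' - r - s = -(s - s' + r) := by abel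
      rw [c1, c2] at h1
      rw [c3, c4] at h2
      rw [c5, c6, hQeven] at h3
      rw [c7, c8, hQeven] at h4
      simp only [hBdef]
      linarith
    have contB : ∀ r, Continuous (fun s => B s r) := by
      intro r
      apply Continuous.div_const
      exact (contQ.comp (continuous_id.add continuous_const)).sub
        (contQ.comp (continuous_id.sub continuous_const))
    have hBrep : ∀ t r, B t r = ∑ i, t i * B (e i) r :=
      fun t r => hrepr (fun s => B s r) (fun a b => hBaddl a b r) (contB r) t
    -- define μ and S
    set μ : Fin d → ℝ := fun i => A (e i) with hμdef
    set S : Matrix (Fin d) (Fin d) ℝ :=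
      Matrix.of (fun i j => 2 * B (e i) (e j)) with hSdef
    have hquad : ∀ t, t ⬝ᵥ S.mulVec t = 2 * Q t := by
      intro t
      have step1 : S.mulVec t = fun i => 2 * B t (e i) := by
        ext i
        simp only [Matrix.mulVec, dotProduct, hSdef, Matrix.of_apply]
        rw [hBrep t (e i), Finset.mul_sum]
        refine Finset.sum_congr rfl fun j _ => ?_
        rw [hBsymm (e i) (e j)]
        ring
      rw [step1]
      simp only [dotProduct]
      have h2 : ∑ i, t i * (2 * B t (e i)) = 2 * ∑ i, t i * B (e i) t := by
        rw [Finset.mul_sum]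
        refine Finset.sum_congr rfl fun i _ => ?_
        rw [hBsymm t (e i)]
        ring
      rw [h2, ← hBrep t t, hBdiag]
    refine ⟨μ, S, ?_, ?_, ?_⟩
    · ext i j
      simp only [Matrix.transpose_apply, hSdef, Matrix.of_apply]
      rw [hBsymm]
    · rw [posSemidef_iff_dotProduct_mulVec]
      constructor
      · ext i j
        simp only [Matrix.conjTranspose_apply, hSdef, Matrix.of_apply, star_trivial]
        rw [hBsymm]
      · intro v
        rw [star_trivial]
        rw [hquad v]
        have := hQnn v
        positivity
    · intro t
      have hμt : μ ⬝ᵥ t = A t := by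
        rw [hrepr A hAadd contA t]
        simp only [dotProduct, hμdef]
        exact Finset.sum_congr rfl fun i _ => mul_comm _ _
      rw [hAQ t, hμt, hquad t]
      ring
  · rintro ⟨μ, S, hsym, hpsd, hrep⟩
    intro n t h u hu husum
    have hsy : ∀ x y : Fin d → ℝ, x ⬝ᵥ S.mulVec y = y ⬝ᵥ S.mulVec x := by
      intro x y
      rw [Matrix.dotProduct_mulVec, ← Matrix.mulVec_transpose, hsym.eq, dotProduct_comm]
    have key : ∀ a b : Fin d → ℝ, φ (a + b) = φ a + φ b + a ⬝ᵥ S.mulVec b := by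
      intro a b
      have h1 : μ ⬝ᵥ (a + b) = μ ⬝ᵥ a + μ ⬝ᵥ b := dotProduct_add _ _ _
      have h2 : (a + b) ⬝ᵥ S.mulVec (a + b)
          = a ⬝ᵥ S.mulVec a + b ⬝ᵥ S.mulVec b + 2 * (a ⬝ᵥ S.mulVec b) := by
        rw [Matrix.mulVec_add, dotProduct_add, add_dotProduct, add_dotProduct, hsy b a]
        ring
      rw [hrep (a + b), hrep a, hrep b, h1, h2]
      ring
    let L : (Fin d → ℝ) →ₗ[ℝ] ℝ :=
      { toFun := fun v => h ⬝ᵥ S.mulVec v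
        map_add' := fun v w => by
          change h ⬝ᵥ S.mulVec (v + w) = h ⬝ᵥ S.mulVec v + h ⬝ᵥ S.mulVec w
          rw [Matrix.mulVec_add, dotProduct_add]
        map_smul' := fun c v => by
          change h ⬝ᵥ S.mulVec (c • v) = c • (h ⬝ᵥ S.mulVec v)
          rw [Matrix.mulVec_smul, dotProduct_smul] }
    have hlin : h ⬝ᵥ S.mulVec (∑ i, u i • t i) = ∑ i, u i * (h ⬝ᵥ S.mulVec (t i)) := by
      have hms := map_sum L (fun i => u i • t i) Finset.univ
      simp only [_root_.map_smul, smul_eq_mul] at hms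
      exact hms
    have hsum2 : ∑ i, u i * φ (t i + h)
        = ∑ i, u i * φ (t i) + φ h + ∑ i, u i * (h ⬝ᵥ S.mulVec (t i)) := by
      have hterm : ∀ i, u i * φ (t i + h)
          = u i * φ (t i) + u i * φ h + u i * (h ⬝ᵥ S.mulVec (t i)) := by
        intro i
        rw [key (t i) h, hsy (t i) h]
        ring
      rw [Finset.sum_congr rfl (fun i _ => hterm i), Finset.sum_add_distrib,
        Finset.sum_add_distrib, ← Finset.sum_mul, husum, one_mul]
    rw [key h (∑ i, u i • t i), hsum2, hlin]
    ring
end
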